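/- Let X = ℝ² with norm ‖(x₁,x₂)‖ = max{|x₁ + x₂/√3|, |x₁ − x₂/√3|, (2/√3)|x₂|} (the regular hexagonal norm). Then for t ≥ 1: J_t[τ,X] = ((τ+1)^t + τ^t)/2)^(1/t) if τ ≥ 1, and J_t[τ,X] = (((τ+1)^t + 1)/2)^(1/t) if 0 ≤ τ ≤ 1. -/

import Mathlib

open Real

noncomputable def skewJames (X : Type*) [NormedAddCommGroup X] [NormedSpace ℝ X]
    (t τ : ℝ) : ℝ :=
  sSup {r : ℝ | ∃ x y : X, ‖x‖ = 1 ∧ ‖y‖ = 1 ∧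
    r = ((‖x + τ • y‖ ^ t + ‖τ • x - y‖ ^ t) / 2) ^ (1 / t)}


set_option maxHeartbeats 4000000 in
lemma hex_key (τ a1 a2 a3 b1 b2 b3 : ℝ) (hτ : 0 ≤ τ)
    (ha : a1 = a2 + a3) (hb : b1 = b2 + b3)
    (h1 : |a1| ≤ 1) (h2 : |a2| ≤ 1) (h3 : |a3| ≤ 1)
    (h4 : |b1| ≤ 1) (h5 : |b2| ≤ 1) (h6 : |b3| ≤ 1) :
    max (max |a1 + τ * b1| |a2 + τ * b2|) |a3 + τ * b3| +
      max (max |τ * a1 - b1| |τ * a2 - b2|) |τ * a3 - b3| ≤ 1 + τ + max τ 1 := by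
  rw [abs_le] at h1 h2 h3 h4 h5 h6
  obtain ⟨h1l, h1r⟩ := h1; obtain ⟨h2l, h2r⟩ := h2; obtain ⟨h3l, h3r⟩ := h3
  obtain ⟨h4l, h4r⟩ := h4; obtain ⟨h5l, h5r⟩ := h5; obtain ⟨h6l, h6r⟩ := h6
  have key : ∀ X Y : ℝ,
      (X = a1 + τ * b1 ∨ X = a2 + τ * b2 ∨ X = a3 + τ * b3) →
      (Y = τ * a1 - b1 ∨ Y = τ * a2 - b2 ∨ Y = τ * a3 - b3) →
      |X| + |Y| ≤ 1 + τ + max τ 1 := by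
    intro X Y hX hY
    have hta : τ * a1 = τ * a2 + τ * a3 := by rw [ha]; ring
    have htb : τ * b1 = τ * b2 + τ * b3 := by rw [hb]; ring
    rcases le_total τ 1 with hτ1 | hτ1
    · rw [max_eq_right hτ1]
      rcases abs_cases X with ⟨hx, _⟩ | ⟨hx, _⟩ <;>
        rcases abs_cases Y with ⟨hy, _⟩ | ⟨hy, _⟩ <;>
        rw [hx, hy] <;>
        rcases hX with rfl | rfl | rfl <;> rcases hY with rfl | rfl | rfl <;>
        linarith [hta, htb, mul_nonneg hτ (by linarith : (0:ℝ) ≤ 1 - b1),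
          mul_nonneg hτ (by linarith : (0:ℝ) ≤ 1 + b1),
          mul_nonneg hτ (by linarith : (0:ℝ) ≤ 1 - b2),
          mul_nonneg hτ (by linarith : (0:ℝ) ≤ 1 + b2),
          mul_nonneg hτ (by linarith : (0:ℝ) ≤ 1 - b3),
          mul_nonneg hτ (by linarith : (0:ℝ) ≤ 1 + b3),
          mul_nonneg hτ (by linarith : (0:ℝ) ≤ 1 - a1),
          mul_nonneg hτ (by linarith : (0:ℝ) ≤ 1 + a1),
          mul_nonneg hτ (by linarith : (0:ℝ) ≤ 1 - a2),
          mul_nonneg hτ (by linarith : (0:ℝ) ≤ 1 + a2),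
          mul_nonneg hτ (by linarith : (0:ℝ) ≤ 1 - a3),
          mul_nonneg hτ (by linarith : (0:ℝ) ≤ 1 + a3),
          mul_nonneg (by linarith : (0:ℝ) ≤ 1 - τ) (by linarith : (0:ℝ) ≤ 1 - a1),
          mul_nonneg (by linarith : (0:ℝ) ≤ 1 - τ) (by linarith : (0:ℝ) ≤ 1 + a1),
          mul_nonneg (by linarith : (0:ℝ) ≤ 1 - τ) (by linarith : (0:ℝ) ≤ 1 - a2),
          mul_nonneg (by linarith : (0:ℝ) ≤ 1 - τ) (by linarith : (0:ℝ) ≤ 1 + a2),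
          mul_nonneg (by linarith : (0:ℝ) ≤ 1 - τ) (by linarith : (0:ℝ) ≤ 1 - a3),
          mul_nonneg (by linarith : (0:ℝ) ≤ 1 - τ) (by linarith : (0:ℝ) ≤ 1 + a3),
          mul_nonneg (by linarith : (0:ℝ) ≤ 1 - τ) (by linarith : (0:ℝ) ≤ 1 - b1),
          mul_nonneg (by linarith : (0:ℝ) ≤ 1 - τ) (by linarith : (0:ℝ) ≤ 1 + b1),
          mul_nonneg (by linarith : (0:ℝ) ≤ 1 - τ) (by linarith : (0:ℝ) ≤ 1 - b2),
          mul_nonneg (by linarith : (0:ℝ) ≤ 1 - τ) (by linarith : (0:ℝ) ≤ 1 + b2),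
          mul_nonneg (by linarith : (0:ℝ) ≤ 1 - τ) (by linarith : (0:ℝ) ≤ 1 - b3),
          mul_nonneg (by linarith : (0:ℝ) ≤ 1 - τ) (by linarith : (0:ℝ) ≤ 1 + b3)]
    · rw [max_eq_left hτ1]
      rcases abs_cases X with ⟨hx, _⟩ | ⟨hx, _⟩ <;>
        rcases abs_cases Y with ⟨hy, _⟩ | ⟨hy, _⟩ <;>
        rw [hx, hy] <;>
        rcases hX with rfl | rfl | rfl <;> rcases hY with rfl | rfl | rfl <;>
        linarith [hta, htb, mul_nonneg hτ (by linarith : (0:ℝ) ≤ 1 - b1),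
          mul_nonneg hτ (by linarith : (0:ℝ) ≤ 1 + b1),
          mul_nonneg hτ (by linarith : (0:ℝ) ≤ 1 - b2),
          mul_nonneg hτ (by linarith : (0:ℝ) ≤ 1 + b2),
          mul_nonneg hτ (by linarith : (0:ℝ) ≤ 1 - b3),
          mul_nonneg hτ (by linarith : (0:ℝ) ≤ 1 + b3),
          mul_nonneg hτ (by linarith : (0:ℝ) ≤ 1 - a1),
          mul_nonneg hτ (by linarith : (0:ℝ) ≤ 1 + a1),
          mul_nonneg hτ (by linarith : (0:ℝ) ≤ 1 - a2),
          mul_nonneg hτ (by linarith : (0:ℝ) ≤ 1 + a2),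
          mul_nonneg hτ (by linarith : (0:ℝ) ≤ 1 - a3),
          mul_nonneg hτ (by linarith : (0:ℝ) ≤ 1 + a3),
          mul_nonneg (by linarith : (0:ℝ) ≤ τ - 1) (by linarith : (0:ℝ) ≤ 1 - a1),
          mul_nonneg (by linarith : (0:ℝ) ≤ τ - 1) (by linarith : (0:ℝ) ≤ 1 + a1),
          mul_nonneg (by linarith : (0:ℝ) ≤ τ - 1) (by linarith : (0:ℝ) ≤ 1 - a2),
          mul_nonneg (by linarith : (0:ℝ) ≤ τ - 1) (by linarith : (0:ℝ) ≤ 1 + a2),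
          mul_nonneg (by linarith : (0:ℝ) ≤ τ - 1) (by linarith : (0:ℝ) ≤ 1 - a3),
          mul_nonneg (by linarith : (0:ℝ) ≤ τ - 1) (by linarith : (0:ℝ) ≤ 1 + a3),
          mul_nonneg (by linarith : (0:ℝ) ≤ τ - 1) (by linarith : (0:ℝ) ≤ 1 - b1),
          mul_nonneg (by linarith : (0:ℝ) ≤ τ - 1) (by linarith : (0:ℝ) ≤ 1 + b1),
          mul_nonneg (by linarith : (0:ℝ) ≤ τ - 1) (by linarith : (0:ℝ) ≤ 1 - b2),
          mul_nonneg (by linarith : (0:ℝ) ≤ τ - 1) (by linarith : (0:ℝ) ≤ 1 + b2),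
          mul_nonneg (by linarith : (0:ℝ) ≤ τ - 1) (by linarith : (0:ℝ) ≤ 1 - b3),
          mul_nonneg (by linarith : (0:ℝ) ≤ τ - 1) (by linarith : (0:ℝ) ≤ 1 + b3)]
  have m1 := max_cases (max |a1 + τ * b1| |a2 + τ * b2|) |a3 + τ * b3|
  have m2 := max_cases |a1 + τ * b1| |a2 + τ * b2|
  have m3 := max_cases (max |τ * a1 - b1| |τ * a2 - b2|) |τ * a3 - b3|
  have m4 := max_cases |τ * a1 - b1| |τ * a2 - b2|
  rcases m1 with ⟨e1, _⟩ | ⟨e1, _⟩ <;> rcases m3 with ⟨e3, _⟩ | ⟨e3, _⟩ <;>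
    rw [e1, e3] <;>
    [skip; skip; skip; exact key _ _ (Or.inr (Or.inr rfl)) (Or.inr (Or.inr rfl))]
  · rcases m2 with ⟨e2, _⟩ | ⟨e2, _⟩ <;> rcases m4 with ⟨e4, _⟩ | ⟨e4, _⟩ <;> rw [e2, e4]
    · exact key _ _ (Or.inl rfl) (Or.inl rfl)
    · exact key _ _ (Or.inl rfl) (Or.inr (Or.inl rfl))
    · exact key _ _ (Or.inr (Or.inl rfl)) (Or.inl rfl)
    · exact key _ _ (Or.inr (Or.inl rfl)) (Or.inr (Or.inl rfl))
  · rcases m2 with ⟨e2, _⟩ | ⟨e2, _⟩ <;> rw [e2]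
    · exact key _ _ (Or.inl rfl) (Or.inr (Or.inr rfl))
    · exact key _ _ (Or.inr (Or.inl rfl)) (Or.inr (Or.inr rfl))
  · rcases m4 with ⟨e4, _⟩ | ⟨e4, _⟩ <;> rw [e4]
    · exact key _ _ (Or.inr (Or.inr rfl)) (Or.inl rfl)
    · exact key _ _ (Or.inr (Or.inr rfl)) (Or.inr (Or.inl rfl))


lemma rpow_pair_le {t : ℝ} (ht : 1 ≤ t) {a b p q : ℝ} (hq : 0 ≤ q) (hqa : q ≤ a)
    (hap : a ≤ p) (hsum : a + b = p + q) : a ^ t + b ^ t ≤ p ^ t + q ^ t := by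
  rcases eq_or_lt_of_le (hqa.trans hap) with h | h
  · have hap' : a = p := le_antisymm hap (h ▸ hqa)
    have hbq : b = q := by linarith
    rw [hap', hbq]
  · set l := (a - q) / (p - q) with hl
    have hpq : 0 < p - q := by linarith
    have hl0 : 0 ≤ l := div_nonneg (by linarith) hpq.le
    have hl1 : l ≤ 1 := (div_le_one hpq).2 (by linarith)
    have hp0 : (0:ℝ) ≤ p := by linarith
    have cv := convexOn_rpow ht
    have hal : a = l * p + (1 - l) * q := by
      field_simp [hl]
      have hlpq : l * (p - q) = a - q := by rw [hl]; exact div_mul_cancel₀ _ hpq.ne'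
      linear_combination -hlpq
    have hbl : b = (1 - l) * p + l * q := by
      have : b = p + q - a := by linarith
      rw [this, hal]; ring
    have h1 := cv.2 (Set.mem_Ici.2 hp0) (Set.mem_Ici.2 hq) hl0 (by linarith) (by ring :
      l + (1 - l) = 1)
    have h2 := cv.2 (Set.mem_Ici.2 hp0) (Set.mem_Ici.2 hq) (by linarith : (0:ℝ) ≤ 1 - l) hl0
      (by ring : 1 - l + l = 1)
    simp only [smul_eq_mul] at h1 h2
    rw [← hal] at h1
    rw [← hbl] at h2
    nlinarith [h1, h2]

set_option linter.unusedVariables false in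
lemma rpow_pair_bound {t : ℝ} (ht : 1 ≤ t) {a b A B : ℝ} (ha0 : 0 ≤ a) (hb0 : 0 ≤ b)
    (hB0 : 0 ≤ B) (hBA : B ≤ A) (haA : a ≤ A) (hbA : b ≤ A) (hsum : a + b ≤ A + B) :
    a ^ t + b ^ t ≤ A ^ t + B ^ t := by
  have ht0 : (0:ℝ) < t := lt_of_lt_of_le one_pos ht
  rcases le_total (a + b) A with h | h
  · have h1 : a ^ t + b ^ t ≤ (a + b) ^ t + (0:ℝ) ^ t :=
      rpow_pair_le ht le_rfl ha0 (by linarith) (by ring)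
    have h2 : (a + b) ^ t ≤ A ^ t := rpow_le_rpow (by linarith) h ht0.le
    have h3 : (0:ℝ) ^ t = 0 := zero_rpow ht0.ne'
    have h4 : (0:ℝ) ≤ B ^ t := rpow_nonneg hB0 t
    linarith
  · have h1 : a ^ t + b ^ t ≤ A ^ t + (a + b - A) ^ t :=
      rpow_pair_le ht (by linarith) (by linarith) haA (by ring)
    have h2 : (a + b - A) ^ t ≤ B ^ t := rpow_le_rpow (by linarith) (by linarith) ht0.le
    linarith

theorem skewJames_hexagonal (X : Type*) [NormedAddCommGroup X] [NormedSpace ℝ X]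
    (e : X ≃ₗ[ℝ] ℝ × ℝ)
    (hnorm : ∀ x : X, ‖x‖ =
      max (max |(e x).1 + (e x).2 / Real.sqrt 3| |(e x).1 - (e x).2 / Real.sqrt 3|)
        (2 / Real.sqrt 3 * |(e x).2|))
    (t τ : ℝ) (ht : 1 ≤ t) (hτ : 0 ≤ τ) :
    (1 ≤ τ → skewJames X t τ = (((τ + 1) ^ t + τ ^ t) / 2) ^ (1 / t)) ∧
    (τ ≤ 1 → skewJames X t τ = (((τ + 1) ^ t + 1) / 2) ^ (1 / t)) := by
  have ht0 : (0:ℝ) < t := lt_of_lt_of_le one_pos ht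
  set s3 := Real.sqrt 3 with hs3
  have hs3pos : 0 < s3 := Real.sqrt_pos.2 (by norm_num)
  have hs3ne : s3 ≠ 0 := hs3pos.ne'
  set M := max τ 1 with hM
  have hM1 : (1:ℝ) ≤ M := le_max_right _ _
  have hMτ : τ ≤ M := le_max_left _ _
  set target : ℝ := (((τ + 1) ^ t + M ^ t) / 2) ^ (1 / t) with htarget
  set S := {r : ℝ | ∃ x y : X, ‖x‖ = 1 ∧ ‖y‖ = 1 ∧
    r = ((‖x + τ • y‖ ^ t + ‖τ • x - y‖ ^ t) / 2) ^ (1 / t)} with hS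
  -- upper bound for every element of S
  have hub : ∀ r ∈ S, r ≤ target := by
    rintro r ⟨x, y, hx, hy, rfl⟩
    set u := e x with hu
    set v := e y with hv
    have hax : max (max |u.1 + u.2 / s3| |u.1 - u.2 / s3|) (2 / s3 * |u.2|) = 1 := by
      rw [← hnorm x, hx]
    have hby : max (max |v.1 + v.2 / s3| |v.1 - v.2 / s3|) (2 / s3 * |v.2|) = 1 := by
      rw [← hnorm y, hy]
    have ha1 : |u.1 + u.2 / s3| ≤ 1 := by
      rw [← hax]; exact le_max_of_le_left (le_max_left _ _)
    have ha2 : |u.1 - u.2 / s3| ≤ 1 := by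
      rw [← hax]; exact le_max_of_le_left (le_max_right _ _)
    have ha3 : |2 / s3 * u.2| ≤ 1 := by
      rw [abs_mul, abs_of_pos (by positivity : (0:ℝ) < 2 / s3), ← hax]
      exact le_max_right _ _
    have hb1 : |v.1 + v.2 / s3| ≤ 1 := by
      rw [← hby]; exact le_max_of_le_left (le_max_left _ _)
    have hb2 : |v.1 - v.2 / s3| ≤ 1 := by
      rw [← hby]; exact le_max_of_le_left (le_max_right _ _)
    have hb3 : |2 / s3 * v.2| ≤ 1 := by
      rw [abs_mul, abs_of_pos (by positivity : (0:ℝ) < 2 / s3), ← hby]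
      exact le_max_right _ _
    -- norms of the combinations
    have hexy1 : (e (x + τ • y)).1 = u.1 + τ * v.1 := by
      rw [map_add, map_smul]; simp [hu, hv]
    have hexy2 : (e (x + τ • y)).2 = u.2 + τ * v.2 := by
      rw [map_add, map_smul]; simp [hu, hv]
    have heyx1 : (e (τ • x - y)).1 = τ * u.1 - v.1 := by
      rw [map_sub, map_smul]; simp [hu, hv]
    have heyx2 : (e (τ • x - y)).2 = τ * u.2 - v.2 := by
      rw [map_sub, map_smul]; simp [hu, hv]
    have hna : ‖x + τ • y‖ =
        max (max |(u.1 + u.2 / s3) + τ * (v.1 + v.2 / s3)|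
          |(u.1 - u.2 / s3) + τ * (v.1 - v.2 / s3)|)
          |2 / s3 * u.2 + τ * (2 / s3 * v.2)| := by
      rw [hnorm, hexy1, hexy2]
      rw [show (u.1 + τ * v.1) + (u.2 + τ * v.2) / s3
            = (u.1 + u.2 / s3) + τ * (v.1 + v.2 / s3) by ring,
        show (u.1 + τ * v.1) - (u.2 + τ * v.2) / s3
            = (u.1 - u.2 / s3) + τ * (v.1 - v.2 / s3) by ring,
        show 2 / s3 * |u.2 + τ * v.2| = |2 / s3 * u.2 + τ * (2 / s3 * v.2)| by
          rw [show 2 / s3 * u.2 + τ * (2 / s3 * v.2) = 2 / s3 * (u.2 + τ * v.2) by ring,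
            abs_mul, abs_of_pos (by positivity : (0:ℝ) < 2 / s3)]]
    have hnb : ‖τ • x - y‖ =
        max (max |τ * (u.1 + u.2 / s3) - (v.1 + v.2 / s3)|
          |τ * (u.1 - u.2 / s3) - (v.1 - v.2 / s3)|)
          |τ * (2 / s3 * u.2) - 2 / s3 * v.2| := by
      rw [hnorm, heyx1, heyx2]
      rw [show (τ * u.1 - v.1) + (τ * u.2 - v.2) / s3
            = τ * (u.1 + u.2 / s3) - (v.1 + v.2 / s3) by ring,
        show (τ * u.1 - v.1) - (τ * u.2 - v.2) / s3
            = τ * (u.1 - u.2 / s3) - (v.1 - v.2 / s3) by ring,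
        show 2 / s3 * |τ * u.2 - v.2| = |τ * (2 / s3 * u.2) - 2 / s3 * v.2| by
          rw [show τ * (2 / s3 * u.2) - 2 / s3 * v.2 = 2 / s3 * (τ * u.2 - v.2) by ring,
            abs_mul, abs_of_pos (by positivity : (0:ℝ) < 2 / s3)]]
    have hsum : ‖x + τ • y‖ + ‖τ • x - y‖ ≤ 1 + τ + M := by
      rw [hna, hnb]
      exact hex_key τ (u.1 + u.2 / s3) (u.1 - u.2 / s3) (2 / s3 * u.2)
        (v.1 + v.2 / s3) (v.1 - v.2 / s3) (2 / s3 * v.2) hτ (by field_simp; ring)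
        (by field_simp; ring) ha1 ha2 ha3 hb1 hb2 hb3
    have haA : ‖x + τ • y‖ ≤ τ + 1 := by
      calc ‖x + τ • y‖ ≤ ‖x‖ + ‖τ • y‖ := norm_add_le _ _
        _ = 1 + τ := by rw [hx, norm_smul, hy, Real.norm_eq_abs, abs_of_nonneg hτ, mul_one]
        _ = τ + 1 := by ring
    have hbA : ‖τ • x - y‖ ≤ τ + 1 := by
      calc ‖τ • x - y‖ ≤ ‖τ • x‖ + ‖y‖ := norm_sub_le _ _
        _ = τ + 1 := by rw [hy, norm_smul, hx, Real.norm_eq_abs, abs_of_nonneg hτ, mul_one]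
    have hpow : ‖x + τ • y‖ ^ t + ‖τ • x - y‖ ^ t ≤ (τ + 1) ^ t + M ^ t :=
      rpow_pair_bound ht (norm_nonneg _) (norm_nonneg _) (by linarith)
        (by rw [hM]; exact max_le (by linarith) (by linarith)) haA hbA
        (by linarith [hsum])
    rw [htarget]
    exact Real.rpow_le_rpow (by positivity) (by linarith) (by positivity)
  -- membership: the supremum is attained
  have hmem : target ∈ S := by
    refine ⟨e.symm (1, 0), e.symm (1/2, s3/2), ?_, ?_, ?_⟩
    · rw [hnorm, e.apply_symm_apply]
      simp
    · rw [hnorm, e.apply_symm_apply]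
      have h1 : (1:ℝ)/2 + s3/2/s3 = 1 := by field_simp; ring
      have h2 : (1:ℝ)/2 - s3/2/s3 = 0 := by field_simp; norm_num
      have h3 : 2/s3 * |s3/2| = 1 := by
        rw [abs_of_pos (by positivity)]; field_simp
      simp only [h1, h2, h3]
      norm_num
    · have hexy1 : (e (e.symm ((1:ℝ), (0:ℝ)) + τ • e.symm ((1:ℝ)/2, s3/2))).1
          = 1 + τ * (1/2) := by
        rw [map_add, map_smul, e.apply_symm_apply, e.apply_symm_apply]; simp
      have hexy2 : (e (e.symm ((1:ℝ), (0:ℝ)) + τ • e.symm ((1:ℝ)/2, s3/2))).2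
          = τ * (s3/2) := by
        rw [map_add, map_smul, e.apply_symm_apply, e.apply_symm_apply]; simp
      have heyx1 : (e (τ • e.symm ((1:ℝ), (0:ℝ)) - e.symm ((1:ℝ)/2, s3/2))).1
          = τ - 1/2 := by
        rw [map_sub, map_smul, e.apply_symm_apply, e.apply_symm_apply]; simp
      have heyx2 : (e (τ • e.symm ((1:ℝ), (0:ℝ)) - e.symm ((1:ℝ)/2, s3/2))).2
          = -(s3/2) := by
        rw [map_sub, map_smul, e.apply_symm_apply, e.apply_symm_apply]; simp
      have hna : ‖e.symm ((1:ℝ), (0:ℝ)) + τ • e.symm ((1:ℝ)/2, s3/2)‖ = τ + 1 := by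
        rw [hnorm, hexy1, hexy2]
        rw [show (1 + τ * (1/2)) + τ * (s3/2) / s3 = 1 + τ by field_simp; ring,
          show (1 + τ * (1/2)) - τ * (s3/2) / s3 = 1 by field_simp; ring,
          show 2/s3 * |τ * (s3/2)| = τ by
            rw [abs_of_nonneg (mul_nonneg hτ (by positivity))]; field_simp]
        rw [abs_of_nonneg (by linarith : (0:ℝ) ≤ 1 + τ), abs_one]
        rw [show max (1 + τ) (1:ℝ) = 1 + τ from max_eq_left (by linarith)]
        rw [show max (1 + τ) τ = 1 + τ from max_eq_left (by linarith)]
        ring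
      have hnb : ‖τ • e.symm ((1:ℝ), (0:ℝ)) - e.symm ((1:ℝ)/2, s3/2)‖ = M := by
        rw [hnorm, heyx1, heyx2]
        rw [show (τ - 1/2) + -(s3/2) / s3 = τ - 1 by field_simp; ring,
          show (τ - 1/2) - -(s3/2) / s3 = τ by field_simp; ring,
          show 2/s3 * |(-(s3/2))| = 1 by
            rw [abs_neg, abs_of_pos (by positivity)]; field_simp]
        rw [abs_of_nonneg hτ]
        rcases le_total τ 1 with h | h
        · rw [abs_of_nonpos (by linarith : τ - 1 ≤ 0), hM, max_eq_right h]
          exact max_eq_right (max_le (by linarith) h)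
        · rw [abs_of_nonneg (by linarith : (0:ℝ) ≤ τ - 1), hM, max_eq_left h,
            show max (τ - 1) τ = τ from max_eq_right (by linarith)]
          exact max_eq_left (by linarith)
      rw [hna, hnb, htarget]
  have hbdd : BddAbove S := ⟨target, fun r hr => hub r hr⟩
  have hmain : skewJames X t τ = target := by
    rw [skewJames, ← hS]
    exact le_antisymm (csSup_le ⟨target, hmem⟩ hub) (le_csSup hbdd hmem)
  constructor
  · intro h1τ
    rw [hmain, htarget, hM, max_eq_left h1τ]
  · intro hτ1
    rw [hmain, htarget, hM, max_eq_right hτ1, Real.one_rpow]
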